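/- Let d = L·d', d' ≥ 3, and let v = [v_1, …, v_L] be uniform on S^{d-1}. Define the regularized vector r_L(v) = [v_1/(√L ‖v_1‖), …, v_L/(√L ‖v_L‖)]. Then E[⟨v, r_L(v)⟩] = √L · Γ((d+L)/(2L)) Γ(d/2) / (Γ(d/(2L)) Γ((d+1)/2)). -/

import Mathlib

open MeasureTheory Measure Metric Real Set
open scoped RealInnerProductSpace ENNReal NNReal

/-- The uniform (normalized surface) probability measure on the unit sphere
in `EuclideanSpace ℝ (Fin n)`. -/
noncomputable def uniformSphere (n : ℕ) :
    Measure (Metric.sphere (0 : EuclideanSpace ℝ (Fin n)) 1) :=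
  ((volume : Measure (EuclideanSpace ℝ (Fin n))).toSphere Set.univ)⁻¹ •
    (volume : Measure (EuclideanSpace ℝ (Fin n))).toSphere

/-- The Beta distribution with parameters `a` and `b`. -/
noncomputable def betaMeasure (a b : ℝ) : Measure ℝ :=
  volume.withDensity fun t =>
    ENNReal.ofReal ((Set.Ioo (0:ℝ) 1).indicator
      (fun t => Real.Gamma (a + b) / (Real.Gamma a * Real.Gamma b) *
        t ^ (a - 1) * (1 - t) ^ (b - 1)) t)

/-- The regularized incomplete Beta function `I_t(a, b)` (equal to `0` for `t ≤ 0`). -/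
noncomputable def regIncBeta (a b t : ℝ) : ℝ :=
  (∫ s in Set.Ioc (0:ℝ) t, s ^ (a - 1) * (1 - s) ^ (b - 1)) /
    (Real.Gamma a * Real.Gamma b / Real.Gamma (a + b))

/-- The block-wise regularized vector `r_L(v)`: each of the `L` blocks of
dimension `d'` is normalized to have norm `1/√L`. -/
noncomputable def regularize (L d' : ℕ) (v : EuclideanSpace ℝ (Fin (L * d'))) :
    EuclideanSpace ℝ (Fin (L * d')) :=
  WithLp.toLp 2 fun p => v p /
    (Real.sqrt L *
      Real.sqrt (∑ j : Fin d', (v (finProdFinEquiv ((finProdFinEquiv.symm p).1, j))) ^ 2))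

/- ## Auxiliary lemmas -/

lemma aux_gamma_int (k : ℕ) (hk : 1 ≤ k) :
    ∫ y in Ioi (0:ℝ), y ^ (k-1) • (y * rexp (-y^2)) = Real.Gamma (((k:ℝ)+1)/2) / 2 := by
  have h1 : ∀ y ∈ Ioi (0:ℝ), y ^ (k-1) • (y * rexp (-y^2))
      = y ^ ((k:ℝ)) * rexp (-y ^ (2:ℝ)) := by
    intro y hy
    have hy0 : 0 < y := hy
    rw [smul_eq_mul, ← Real.rpow_natCast y (k-1), Real.rpow_two]
    have h2 : (↑(k - 1) : ℝ) = (k : ℝ) - 1 := by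
      push_cast [Nat.cast_sub hk]; ring
    rw [h2, show y ^ ((k:ℝ)-1) * (y * rexp (-y ^ 2)) = y ^ ((k:ℝ)-1) * y ^ (1:ℝ) * rexp (-y ^ 2) by
      rw [Real.rpow_one]; ring, ← Real.rpow_add hy0]
    norm_num [Real.rpow_two]
  rw [setIntegral_congr_fun measurableSet_Ioi h1]
  rw [integral_rpow_mul_exp_neg_rpow (by norm_num)
    (by exact neg_one_lt_zero.trans_le (Nat.cast_nonneg k))]
  ring

lemma aux_ball_toReal (k : ℕ) [NeZero k] :
    (volume (ball (0 : EuclideanSpace ℝ (Fin k)) 1)).toReal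
      = Real.sqrt π ^ k / Real.Gamma (k / 2 + 1) := by
  have : Nonempty (Fin k) := Fin.pos_iff_nonempty.mp (Nat.pos_of_ne_zero (NeZero.ne k))
  rw [EuclideanSpace.volume_ball]
  simp [Fintype.card_fin, ENNReal.toReal_ofReal
    (by positivity : (0:ℝ) ≤ Real.sqrt π ^ k / Real.Gamma (k / 2 + 1))]

lemma aux_J (k : ℕ) (hk : 1 ≤ k) :
    ∫ y : EuclideanSpace ℝ (Fin k), ‖y‖ * rexp (-‖y‖^2)
      = (k * (Real.sqrt π ^ k / Real.Gamma (k / 2 + 1))) * (Real.Gamma (((k:ℝ)+1)/2) / 2) := by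
  haveI : NeZero k := ⟨by omega⟩
  haveI : Nonempty (Fin k) := Fin.pos_iff_nonempty.mp hk
  haveI : Nontrivial (EuclideanSpace ℝ (Fin k)) := by
    apply Module.nontrivial_of_finrank_pos (R := ℝ)
    rw [finrank_euclideanSpace_fin]; omega
  have := integral_fun_norm_addHaar (volume : Measure (EuclideanSpace ℝ (Fin k)))
    (fun y => y * rexp (-y^2))
  simp only [finrank_euclideanSpace_fin] at this
  rw [this, aux_gamma_int k hk, measureReal_def, aux_ball_toReal k]
  simp [smul_eq_mul]; ring

lemma aux_gauss (k : ℕ) :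
    ∫ y : EuclideanSpace ℝ (Fin k), rexp (-‖y‖^2) = π ^ ((k:ℝ) / 2) := by
  have h := GaussianFourier.integral_rexp_neg_mul_sq_norm
    (V := EuclideanSpace ℝ (Fin k)) (one_pos)
  simp only [finrank_euclideanSpace_fin, neg_mul, one_mul, div_one] at h
  rw [← h]

lemma aux_int1 (k : ℕ) :
    Integrable (fun y : EuclideanSpace ℝ (Fin k) => ‖y‖ * rexp (-‖y‖^2)) := by
  have hI : Integrable (fun y : EuclideanSpace ℝ (Fin k) =>
      Complex.exp (-(1/2 : ℂ) * ‖y‖^2 + 0 * (inner ℝ 0 y : ℝ))) :=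
    GaussianFourier.integrable_cexp_neg_mul_sq_norm_add (by norm_num) 0 0
  have hR : Integrable (fun y : EuclideanSpace ℝ (Fin k) => rexp (-(1/2) * ‖y‖^2)) := by
    have := hI.norm
    simp only [Complex.norm_exp] at this
    refine this.congr ?_
    filter_upwards with y
    simp [Complex.add_re, Complex.mul_re, ← Complex.ofReal_pow]
  apply hR.mono
  · apply Continuous.aestronglyMeasurable; fun_prop
  · filter_upwards with y
    simp only [norm_mul, norm_norm, Real.norm_eq_abs, Real.abs_exp]
    have h1 : ‖y‖ * rexp (-‖y‖^2) ≤ rexp (-(1/2) * ‖y‖^2) := by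
      rw [show (-‖y‖^2 : ℝ) = -(1/2)*‖y‖^2 + -(1/2)*‖y‖^2 by ring, Real.exp_add]
      have h2 : ‖y‖ * rexp (-(1/2)*‖y‖^2) ≤ 1 := by
        have hle : ‖y‖ ≤ rexp ((1/2)*‖y‖^2) := by
          have := Real.add_one_le_exp ((1/2)*‖y‖^2)
          nlinarith [sq_nonneg (‖y‖ - 1)]
        calc ‖y‖ * rexp (-(1/2)*‖y‖^2) ≤ rexp ((1/2)*‖y‖^2) * rexp (-(1/2)*‖y‖^2) :=
              mul_le_mul_of_nonneg_right hle (Real.exp_nonneg _)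
          _ = 1 := by rw [← Real.exp_add]; norm_num
      calc ‖y‖ * (rexp (-(1/2)*‖y‖^2) * rexp (-(1/2)*‖y‖^2))
          = (‖y‖ * rexp (-(1/2)*‖y‖^2)) * rexp (-(1/2)*‖y‖^2) := by ring
        _ ≤ 1 * rexp (-(1/2)*‖y‖^2) := by
            apply mul_le_mul_of_nonneg_right h2 (Real.exp_nonneg _)
        _ = rexp (-(1/2)*‖y‖^2) := one_mul _
    calc |‖y‖| * rexp (-‖y‖^2) = ‖y‖ * rexp (-‖y‖^2) := by
          rw [abs_of_nonneg (norm_nonneg _)]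
      _ ≤ rexp (-(1/2)*‖y‖^2) := h1

lemma aux_int0 (k : ℕ) :
    Integrable (fun y : EuclideanSpace ℝ (Fin k) => rexp (-‖y‖^2)) := by
  have hI : Integrable (fun y : EuclideanSpace ℝ (Fin k) =>
      Complex.exp (-(1 : ℂ) * ‖y‖^2 + 0 * (inner ℝ 0 y : ℝ))) :=
    GaussianFourier.integrable_cexp_neg_mul_sq_norm_add (by norm_num) 0 0
  have := hI.norm
  simp only [Complex.norm_exp] at this
  refine this.congr ?_
  filter_upwards with y
  simp [Complex.add_re, Complex.mul_re, ← Complex.ofReal_pow]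

lemma aux_transfer (k : ℕ) (G : (Fin k → ℝ) → ℝ) :
    ∫ y : EuclideanSpace ℝ (Fin k), G (fun j => y j) = ∫ a : Fin k → ℝ, G a :=
  (EuclideanSpace.volume_preserving_symm_measurableEquiv_toLp (Fin k)).integral_comp' G

lemma aux_norm_eq (k : ℕ) (y : EuclideanSpace ℝ (Fin k)) :
    ‖y‖ = Real.sqrt (∑ j, y j ^ 2) := by
  rw [EuclideanSpace.norm_eq]
  congr 1
  exact Finset.sum_congr rfl fun j _ => by rw [Real.norm_eq_abs, sq_abs]

lemma aux_normsq_eq (k : ℕ) (y : EuclideanSpace ℝ (Fin k)) :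
    ‖y‖ ^ 2 = ∑ j, y j ^ 2 := by
  rw [aux_norm_eq, Real.sq_sqrt (Finset.sum_nonneg fun j _ => sq_nonneg _)]

lemma aux_pi_int1 (k : ℕ) :
    Integrable (fun a : Fin k → ℝ =>
      Real.sqrt (∑ j, a j ^ 2) * rexp (-(∑ j, a j ^ 2))) := by
  have h := (EuclideanSpace.volume_preserving_symm_measurableEquiv_toLp (Fin k)).integrable_comp_emb
    (MeasurableEquiv.measurableEmbedding _)
    (g := fun a : Fin k → ℝ => Real.sqrt (∑ j, a j ^ 2) * rexp (-(∑ j, a j ^ 2)))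
  rw [← h]
  have : (fun a : Fin k → ℝ => Real.sqrt (∑ j, a j ^ 2) * rexp (-(∑ j, a j ^ 2)))
      ∘ (MeasurableEquiv.toLp 2 (Fin k → ℝ)).symm
      = fun y : EuclideanSpace ℝ (Fin k) => ‖y‖ * rexp (-‖y‖^2) := by
    funext y
    simp only [Function.comp_apply]
    rw [aux_normsq_eq, aux_norm_eq]
    rfl
  rw [this]
  exact aux_int1 k

lemma aux_pi_int0 (k : ℕ) :
    Integrable (fun a : Fin k → ℝ => rexp (-(∑ j, a j ^ 2))) := by
  have h := (EuclideanSpace.volume_preserving_symm_measurableEquiv_toLp (Fin k)).integrable_comp_emb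
    (MeasurableEquiv.measurableEmbedding _)
    (g := fun a : Fin k → ℝ => rexp (-(∑ j, a j ^ 2)))
  rw [← h]
  have : (fun a : Fin k → ℝ => rexp (-(∑ j, a j ^ 2)))
      ∘ (MeasurableEquiv.toLp 2 (Fin k → ℝ)).symm
      = fun y : EuclideanSpace ℝ (Fin k) => rexp (-‖y‖^2) := by
    funext y
    simp only [Function.comp_apply]
    rw [aux_normsq_eq]
    rfl
  rw [this]
  exact aux_int0 k

lemma aux_pi_val1 (k : ℕ) :
    ∫ a : Fin k → ℝ, Real.sqrt (∑ j, a j ^ 2) * rexp (-(∑ j, a j ^ 2))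
      = ∫ y : EuclideanSpace ℝ (Fin k), ‖y‖ * rexp (-‖y‖^2) := by
  rw [← aux_transfer k (fun a => Real.sqrt (∑ j, a j ^ 2) * rexp (-(∑ j, a j ^ 2)))]
  refine integral_congr_ae (Filter.Eventually.of_forall fun y => ?_)
  simp only
  rw [aux_normsq_eq, aux_norm_eq]

lemma aux_pi_val0 (k : ℕ) :
    ∫ a : Fin k → ℝ, rexp (-(∑ j, a j ^ 2)) = π ^ ((k:ℝ) / 2) := by
  rw [← aux_transfer k (fun a => rexp (-(∑ j, a j ^ 2))), ← aux_gauss k]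
  refine integral_congr_ae (Filter.Eventually.of_forall fun y => ?_)
  simp only
  rw [aux_normsq_eq]

lemma aux_polar (n : ℕ) (hn : 1 ≤ n) (f : EuclideanSpace ℝ (Fin n) → ℝ)
    (hf : ∀ (c : ℝ), 0 ≤ c → ∀ x, f (c • x) = c * f x) :
    ∫ x : EuclideanSpace ℝ (Fin n), f x * rexp (-‖x‖^2)
      = (∫ v : Metric.sphere (0 : EuclideanSpace ℝ (Fin n)) 1, f v
          ∂((volume : Measure (EuclideanSpace ℝ (Fin n))).toSphere))
        * (Real.Gamma (((n:ℝ)+1)/2) / 2) := by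
  haveI : Nonempty (Fin n) := Fin.pos_iff_nonempty.mp hn
  haveI : Nontrivial (EuclideanSpace ℝ (Fin n)) := by
    apply Module.nontrivial_of_finrank_pos (R := ℝ)
    rw [finrank_euclideanSpace_fin]; omega
  let E := EuclideanSpace ℝ (Fin n)
  let μ : Measure E := volume
  have hdim : Module.finrank ℝ E = n := finrank_euclideanSpace_fin
  show ∫ x : E, f x * rexp (-‖x‖^2) ∂μ = _
  calc ∫ x : E, f x * rexp (-‖x‖^2) ∂μ
      = ∫ x : ({(0:E)}ᶜ : Set E), f x.1 * rexp (-‖x.1‖^2) ∂(μ.comap Subtype.val) := by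
        rw [integral_subtype_comap (measurableSet_singleton _).compl
          (fun x => f x * rexp (-‖x‖^2)), MeasureTheory.restrict_compl_singleton]
    _ = ∫ y : Metric.sphere (0:E) 1 × Ioi (0:ℝ),
          f y.1.val * (y.2.val * rexp (-(y.2.val)^2))
          ∂(μ.toSphere.prod (volumeIoiPow (Module.finrank ℝ E - 1))) := by
        rw [← (μ.measurePreserving_homeomorphUnitSphereProd).integral_comp
          (Homeomorph.measurableEmbedding _)
          (fun y => f y.1.val * (y.2.val * rexp (-(y.2.val)^2)))]
        refine integral_congr_ae (Filter.Eventually.of_forall fun x => ?_)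
        have hx : (x : E) ≠ 0 := x.2
        have hnrm : ‖(x : E)‖ ≠ 0 := norm_ne_zero_iff.mpr hx
        simp only [homeomorphUnitSphereProd_apply_fst_coe,
          homeomorphUnitSphereProd_apply_snd_coe]
        rw [hf (‖(x:E)‖⁻¹) (by positivity) x.1]
        field_simp
    _ = (∫ v : Metric.sphere (0:E) 1, f v ∂μ.toSphere)
        * ∫ r : Ioi (0:ℝ), r.val * rexp (-(r.val)^2)
            ∂(volumeIoiPow (Module.finrank ℝ E - 1)) := by
        exact integral_prod_mul (fun v : Metric.sphere (0:E) 1 => f v.val)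
          (fun r : Ioi (0:ℝ) => r.val * rexp (-(r.val)^2))
    _ = (∫ v : Metric.sphere (0:E) 1, f v ∂μ.toSphere) * (Real.Gamma (((n:ℝ)+1)/2) / 2) := by
        congr 1
        simp only [Measure.volumeIoiPow, ENNReal.ofReal]
        rw [integral_withDensity_eq_integral_smul,
          integral_subtype_comap measurableSet_Ioi
            (fun a : ℝ => Real.toNNReal (a ^ (Module.finrank ℝ E - 1)) • (a * rexp (-a^2))),
          setIntegral_congr_fun measurableSet_Ioi (g := fun y : ℝ =>
            y ^ (Module.finrank ℝ E - 1) • (y * rexp (-y^2))) (fun x hx => ?_)]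
        · rw [hdim, aux_gamma_int n hn]
        · rw [NNReal.smul_def, Real.coe_toNNReal _ (pow_nonneg (le_of_lt hx) _)]
        · exact (measurable_subtype_coe.pow_const _).real_toNNReal

section T0

noncomputable def auxRho (L' d' : ℕ) : Fin d' ⊕ Fin (L' * d') ≃ Fin ((L' + 1) * d') :=
  finSumFinEquiv.trans (finCongr (by ring))

lemma auxRho_inl (L' d' : ℕ) (j : Fin d') :
    auxRho L' d' (Sum.inl j) = finProdFinEquiv ((0 : Fin (L' + 1)), j) := by
  apply Fin.ext
  simp [auxRho, finProdFinEquiv, finSumFinEquiv]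

lemma aux_pt (L' d' : ℕ) (ab : (Fin d' → ℝ) × (Fin (L' * d') → ℝ)) :
    (fun u : Fin ((L'+1)*d') → ℝ =>
        Real.sqrt (∑ j : Fin d', u (finProdFinEquiv ((0 : Fin (L'+1)), j)) ^ 2)
          * rexp (-(∑ p, u p ^ 2)))
      ((MeasurableEquiv.piCongrLeft (fun _ : Fin ((L'+1)*d') => ℝ) (auxRho L' d'))
        ((MeasurableEquiv.sumPiEquivProdPi (fun _ : Fin d' ⊕ Fin (L' * d') => ℝ)).symm ab))
    = (Real.sqrt (∑ j, ab.1 j ^ 2) * rexp (-(∑ j, ab.1 j ^ 2)))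
        * rexp (-(∑ r, ab.2 r ^ 2)) := by
  set w := (MeasurableEquiv.sumPiEquivProdPi (fun _ : Fin d' ⊕ Fin (L' * d') => ℝ)).symm ab
    with hw
  have hwapp : ∀ q, w q = Sum.rec ab.1 ab.2 q := by
    intro q
    rw [hw]
    simp [MeasurableEquiv.sumPiEquivProdPi, Equiv.sumPiEquivProdPi]
  set φ := (MeasurableEquiv.piCongrLeft (fun _ : Fin ((L'+1)*d') => ℝ) (auxRho L' d')) w
  have hφ : ∀ q, φ (auxRho L' d' q) = w q := by
    intro q
    simp [φ, MeasurableEquiv.piCongrLeft, Equiv.piCongrLeft_apply_apply]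
  have hsum : (∑ p, φ p ^ 2) = (∑ j, ab.1 j ^ 2) + (∑ r, ab.2 r ^ 2) := by
    rw [← Equiv.sum_comp (auxRho L' d') (fun p => φ p ^ 2)]
    simp_rw [hφ, hwapp]
    rw [Fintype.sum_sum_type]
  have hblk : (∑ j : Fin d', φ (finProdFinEquiv ((0 : Fin (L'+1)), j)) ^ 2)
      = ∑ j, ab.1 j ^ 2 := by
    refine Finset.sum_congr rfl fun j _ => ?_
    rw [← auxRho_inl, hφ, hwapp]
  simp only [hsum, hblk, neg_add, Real.exp_add]
  ring

lemma aux_T0 (L' d' : ℕ) :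
    ∫ u : Fin ((L'+1)*d') → ℝ,
        Real.sqrt (∑ j : Fin d', u (finProdFinEquiv ((0 : Fin (L'+1)), j)) ^ 2)
          * rexp (-(∑ p, u p ^ 2))
      = (∫ a : Fin d' → ℝ, Real.sqrt (∑ j, a j ^ 2) * rexp (-(∑ j, a j ^ 2)))
        * (∫ b : Fin (L' * d') → ℝ, rexp (-(∑ r, b r ^ 2))) := by
  rw [← (volume_measurePreserving_piCongrLeft (fun _ : Fin ((L'+1)*d') => ℝ)
    (auxRho L' d')).integral_comp' (fun u =>
      Real.sqrt (∑ j : Fin d', u (finProdFinEquiv ((0 : Fin (L'+1)), j)) ^ 2)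
        * rexp (-(∑ p, u p ^ 2)))]
  rw [← (volume_measurePreserving_sumPiEquivProdPi_symm
    (fun _ : Fin d' ⊕ Fin (L' * d') => ℝ)).integral_comp' _]
  rw [show (volume : Measure ((Fin d' → ℝ) × (Fin (L' * d') → ℝ)))
    = (volume : Measure (Fin d' → ℝ)).prod (volume : Measure (Fin (L' * d') → ℝ))
    from volume_eq_prod _ _]
  rw [← integral_prod_mul (fun a : Fin d' → ℝ =>
      Real.sqrt (∑ j, a j ^ 2) * rexp (-(∑ j, a j ^ 2)))
    (fun b : Fin (L' * d') → ℝ => rexp (-(∑ r, b r ^ 2)))]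
  refine integral_congr_ae (Filter.Eventually.of_forall fun ab => ?_)
  exact aux_pt L' d' ab

lemma aux_T0_int (L' d' : ℕ) :
    Integrable (fun u : Fin ((L'+1)*d') → ℝ =>
        Real.sqrt (∑ j : Fin d', u (finProdFinEquiv ((0 : Fin (L'+1)), j)) ^ 2)
          * rexp (-(∑ p, u p ^ 2))) := by
  rw [← (volume_measurePreserving_piCongrLeft (fun _ : Fin ((L'+1)*d') => ℝ)
    (auxRho L' d')).integrable_comp_emb (MeasurableEquiv.measurableEmbedding _)]
  rw [← (volume_measurePreserving_sumPiEquivProdPi_symm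
    (fun _ : Fin d' ⊕ Fin (L' * d') => ℝ)).integrable_comp_emb
    (MeasurableEquiv.measurableEmbedding _)]
  have : Integrable (fun ab : (Fin d' → ℝ) × (Fin (L' * d') → ℝ) =>
      (Real.sqrt (∑ j, ab.1 j ^ 2) * rexp (-(∑ j, ab.1 j ^ 2)))
        * rexp (-(∑ r, ab.2 r ^ 2))) := by
    rw [show (volume : Measure ((Fin d' → ℝ) × (Fin (L' * d') → ℝ)))
      = (volume : Measure (Fin d' → ℝ)).prod (volume : Measure (Fin (L' * d') → ℝ))
      from volume_eq_prod _ _]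
    exact (aux_pi_int1 d').mul_prod (aux_pi_int0 (L' * d'))
  refine this.congr (Filter.Eventually.of_forall fun ab => ?_)
  exact (aux_pt L' d' ab).symm

end T0

section Ti

noncomputable def auxSigma (L' d' : ℕ) (i : Fin (L' + 1)) :
    Fin ((L'+1) * d') ≃ Fin ((L'+1) * d') :=
  finProdFinEquiv.symm.trans
    ((Equiv.prodCongr (Equiv.swap (0 : Fin (L'+1)) i) (Equiv.refl (Fin d'))).trans
      finProdFinEquiv)

lemma auxSigma_apply (L' d' : ℕ) (i : Fin (L' + 1)) (j : Fin d') :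
    auxSigma L' d' i (finProdFinEquiv (i, j)) = finProdFinEquiv ((0 : Fin (L'+1)), j) := by
  simp [auxSigma, Equiv.swap_apply_right]

lemma aux_pt2 (L' d' : ℕ) (i : Fin (L' + 1)) (w : Fin ((L'+1)*d') → ℝ) :
    (fun u : Fin ((L'+1)*d') → ℝ =>
        Real.sqrt (∑ j : Fin d', u (finProdFinEquiv (i, j)) ^ 2)
          * rexp (-(∑ p, u p ^ 2)))
      ((MeasurableEquiv.piCongrLeft (fun _ : Fin ((L'+1)*d') => ℝ) (auxSigma L' d' i).symm) w)
    = Real.sqrt (∑ j : Fin d', w (finProdFinEquiv ((0 : Fin (L'+1)), j)) ^ 2)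
        * rexp (-(∑ p, w p ^ 2)) := by
  set φ := (MeasurableEquiv.piCongrLeft (fun _ : Fin ((L'+1)*d') => ℝ) (auxSigma L' d' i).symm) w
  have hφ : ∀ q, φ ((auxSigma L' d' i).symm q) = w q := by
    intro q
    simp [φ, MeasurableEquiv.piCongrLeft, Equiv.piCongrLeft_apply_apply]
  have hsum : (∑ p, φ p ^ 2) = ∑ p, w p ^ 2 := by
    rw [← Equiv.sum_comp (auxSigma L' d' i).symm (fun p => φ p ^ 2)]
    simp_rw [hφ]
  have hblk : (∑ j : Fin d', φ (finProdFinEquiv (i, j)) ^ 2)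
      = ∑ j : Fin d', w (finProdFinEquiv ((0 : Fin (L'+1)), j)) ^ 2 := by
    refine Finset.sum_congr rfl fun j _ => ?_
    have h : finProdFinEquiv (i, j)
        = (auxSigma L' d' i).symm (finProdFinEquiv ((0 : Fin (L'+1)), j)) := by
      rw [← auxSigma_apply L' d' i j, Equiv.symm_apply_apply]
    rw [h, hφ]
  simp only [hsum, hblk]

lemma aux_Ti (L' d' : ℕ) (i : Fin (L' + 1)) :
    ∫ u : Fin ((L'+1)*d') → ℝ,
        Real.sqrt (∑ j : Fin d', u (finProdFinEquiv (i, j)) ^ 2)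
          * rexp (-(∑ p, u p ^ 2))
      = (∫ a : Fin d' → ℝ, Real.sqrt (∑ j, a j ^ 2) * rexp (-(∑ j, a j ^ 2)))
        * (∫ b : Fin (L' * d') → ℝ, rexp (-(∑ r, b r ^ 2))) := by
  rw [← (volume_measurePreserving_piCongrLeft (fun _ : Fin ((L'+1)*d') => ℝ)
    (auxSigma L' d' i).symm).integral_comp' (fun u =>
      Real.sqrt (∑ j : Fin d', u (finProdFinEquiv (i, j)) ^ 2)
        * rexp (-(∑ p, u p ^ 2)))]
  rw [← aux_T0 L' d']
  refine integral_congr_ae (Filter.Eventually.of_forall fun w => ?_)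
  exact aux_pt2 L' d' i w

lemma aux_Ti_int (L' d' : ℕ) (i : Fin (L' + 1)) :
    Integrable (fun u : Fin ((L'+1)*d') → ℝ =>
        Real.sqrt (∑ j : Fin d', u (finProdFinEquiv (i, j)) ^ 2)
          * rexp (-(∑ p, u p ^ 2))) := by
  rw [← (volume_measurePreserving_piCongrLeft (fun _ : Fin ((L'+1)*d') => ℝ)
    (auxSigma L' d' i).symm).integrable_comp_emb (MeasurableEquiv.measurableEmbedding _)]
  refine (aux_T0_int L' d').congr (Filter.Eventually.of_forall fun w => ?_)
  exact (aux_pt2 L' d' i w).symm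

end Ti

lemma aux_A (L' d' : ℕ) :
    ∫ u : Fin ((L'+1)*d') → ℝ,
        (∑ i : Fin (L'+1),
          Real.sqrt (∑ j : Fin d', u (finProdFinEquiv (i, j)) ^ 2))
          * rexp (-(∑ p, u p ^ 2))
      = (L'+1 : ℝ) * ((∫ a : Fin d' → ℝ, Real.sqrt (∑ j, a j ^ 2) * rexp (-(∑ j, a j ^ 2)))
        * (∫ b : Fin (L' * d') → ℝ, rexp (-(∑ r, b r ^ 2)))) := by
  have h1 : ∀ u : Fin ((L'+1)*d') → ℝ,
      (∑ i : Fin (L'+1), Real.sqrt (∑ j : Fin d', u (finProdFinEquiv (i, j)) ^ 2))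
        * rexp (-(∑ p, u p ^ 2))
      = ∑ i : Fin (L'+1),
          Real.sqrt (∑ j : Fin d', u (finProdFinEquiv (i, j)) ^ 2) * rexp (-(∑ p, u p ^ 2)) :=
    fun u => Finset.sum_mul _ _ _
  simp_rw [h1]
  rw [integral_finset_sum _ (fun i _ => aux_Ti_int L' d' i)]
  simp_rw [fun i => aux_Ti L' d' i]
  rw [Finset.sum_const, Finset.card_univ, Fintype.card_fin, nsmul_eq_mul]
  push_cast
  ring

lemma aux_inner (L d' : ℕ) (v : EuclideanSpace ℝ (Fin (L * d'))) :
    ⟪v, regularize L d' v⟫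
      = (∑ i : Fin L, Real.sqrt (∑ j : Fin d', v (finProdFinEquiv (i, j)) ^ 2))
          / Real.sqrt L := by
  rw [PiLp.inner_apply]
  simp only [RCLike.inner_apply, conj_trivial]
  rw [Finset.sum_congr rfl fun p _ => mul_comm ((regularize L d' v) p) (v p)]
  rw [← Equiv.sum_comp (finProdFinEquiv : Fin L × Fin d' ≃ Fin (L * d'))
    (fun p => v p * regularize L d' v p), Fintype.sum_prod_type]
  rw [Finset.sum_div]
  refine Finset.sum_congr rfl fun i _ => ?_
  have hterm : ∀ j : Fin d', v (finProdFinEquiv (i, j)) * regularize L d' v (finProdFinEquiv (i, j))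
      = v (finProdFinEquiv (i, j)) ^ 2
        / (Real.sqrt L * Real.sqrt (∑ j' : Fin d', v (finProdFinEquiv (i, j')) ^ 2)) := by
    intro j
    rw [regularize]
    simp only [PiLp.toLp_apply]
    have he : (finProdFinEquiv.symm (finProdFinEquiv (i, j))).1 = i := by
      rw [Equiv.symm_apply_apply]
    rw [he, mul_div_assoc']
    ring_nf
  rw [Finset.sum_congr rfl fun j _ => hterm j, ← Finset.sum_div]
  set S := ∑ j' : Fin d', v (finProdFinEquiv (i, j')) ^ 2 with hSdef
  have hS : 0 ≤ S := Finset.sum_nonneg fun j _ => sq_nonneg _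
  rcases eq_or_lt_of_le hS with h0 | hpos
  · rw [← h0, Real.sqrt_zero, mul_zero, div_zero, zero_div]
  · have hs : Real.sqrt S ≠ 0 := ne_of_gt (Real.sqrt_pos.mpr hpos)
    rw [show S / (Real.sqrt L * Real.sqrt S)
        = (Real.sqrt S * Real.sqrt S) / (Real.sqrt L * Real.sqrt S) by
      rw [Real.mul_self_sqrt hS]]
    rw [mul_div_mul_right _ _ hs]
theorem stmt16 (L d' : ℕ) (hL : 1 ≤ L) (hd' : 3 ≤ d') :
    ∫ v : Metric.sphere (0 : EuclideanSpace ℝ (Fin (L * d'))) 1,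
        ⟪(v : EuclideanSpace ℝ (Fin (L * d'))),
          regularize L d' (v : EuclideanSpace ℝ (Fin (L * d')))⟫
        ∂(uniformSphere (L * d'))
      = Real.sqrt L *
          (Real.Gamma (((L * d' : ℕ) + (L : ℝ)) / (2 * L)) * Real.Gamma ((L * d' : ℕ) / 2)) /
          (Real.Gamma ((L * d' : ℕ) / (2 * (L : ℝ))) * Real.Gamma (((L * d' : ℕ) + 1) / 2)) := by
  obtain ⟨L', rfl⟩ : ∃ L', L = L' + 1 := ⟨L - 1, by omega⟩
  have hd1 : 1 ≤ d' := by omega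
  have hn1 : 1 ≤ (L' + 1) * d' := Nat.one_le_iff_ne_zero.mpr (by positivity)
  haveI : NeZero ((L' + 1) * d') := ⟨by omega⟩
  haveI : Nonempty (Fin ((L' + 1) * d')) := Fin.pos_iff_nonempty.mp hn1
  haveI : Nontrivial (EuclideanSpace ℝ (Fin ((L' + 1) * d'))) := by
    apply Module.nontrivial_of_finrank_pos (R := ℝ)
    rw [finrank_euclideanSpace_fin]; omega
  set fE : EuclideanSpace ℝ (Fin ((L' + 1) * d')) → ℝ :=
    fun x => ∑ i : Fin (L' + 1), Real.sqrt (∑ j : Fin d', x (finProdFinEquiv (i, j)) ^ 2)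
    with hfE
  -- homogeneity
  have hom : ∀ c : ℝ, 0 ≤ c → ∀ x, fE (c • x) = c * fE x := by
    intro c hc x
    rw [hfE]
    simp only
    rw [Finset.mul_sum]
    refine Finset.sum_congr rfl fun i _ => ?_
    have happ : ∀ j : Fin d', (c • x) (finProdFinEquiv (i, j)) = c * x (finProdFinEquiv (i, j)) :=
      fun j => rfl
    simp_rw [happ, mul_pow, ← Finset.mul_sum, Real.sqrt_mul (sq_nonneg c), Real.sqrt_sq hc]
  -- Gaussian-weighted integral of fE
  have hA : ∫ x : EuclideanSpace ℝ (Fin ((L' + 1) * d')), fE x * rexp (-‖x‖ ^ 2)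
      = ((L' + 1 : ℝ)) *
          (((d' : ℝ) * (Real.sqrt π ^ d' / Real.Gamma ((d' : ℝ) / 2 + 1))
              * (Real.Gamma (((d' : ℝ) + 1) / 2) / 2))
            * π ^ (((L' * d' : ℕ) : ℝ) / 2)) := by
    have t1 := aux_transfer ((L' + 1) * d')
      (fun u => (∑ i : Fin (L' + 1),
          Real.sqrt (∑ j : Fin d', u (finProdFinEquiv (i, j)) ^ 2)) * rexp (-(∑ p, u p ^ 2)))
    have t2 : ∫ x : EuclideanSpace ℝ (Fin ((L' + 1) * d')), fE x * rexp (-‖x‖ ^ 2)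
        = ∫ y : EuclideanSpace ℝ (Fin ((L' + 1) * d')),
            (fun u => (∑ i : Fin (L' + 1),
              Real.sqrt (∑ j : Fin d', u (finProdFinEquiv (i, j)) ^ 2))
                * rexp (-(∑ p, u p ^ 2))) (fun j => y j) := by
      refine integral_congr_ae (Filter.Eventually.of_forall fun y => ?_)
      simp only [hfE]
      rw [aux_normsq_eq]
    rw [t2, t1, aux_A L' d', aux_pi_val1 d', aux_pi_val0 (L' * d'), aux_J d' hd1]
  -- polar decomposition
  have hpol := aux_polar ((L' + 1) * d') hn1 fE hom
  have hh : (0:ℝ) < Real.Gamma ((((L' + 1) * d' : ℕ) : ℝ) + 1) := by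
    apply Real.Gamma_pos_of_pos; positivity
  have hhpos : (0:ℝ) < Real.Gamma (((((L' + 1) * d' : ℕ) : ℝ) + 1) / 2) := by
    apply Real.Gamma_pos_of_pos; positivity
  have hSf : (∫ v : Metric.sphere (0 : EuclideanSpace ℝ (Fin ((L' + 1) * d'))) 1, fE v
        ∂((volume : Measure (EuclideanSpace ℝ (Fin ((L' + 1) * d')))).toSphere))
      = (((L' + 1 : ℝ)) *
          (((d' : ℝ) * (Real.sqrt π ^ d' / Real.Gamma ((d' : ℝ) / 2 + 1))
              * (Real.Gamma (((d' : ℝ) + 1) / 2) / 2))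
            * π ^ (((L' * d' : ℕ) : ℝ) / 2)))
        / (Real.Gamma (((((L' + 1) * d' : ℕ) : ℝ) + 1) / 2) / 2) := by
    rw [eq_div_iff (by positivity), ← hpol, hA]
  -- normalizing constant
  have hc : (((volume : Measure (EuclideanSpace ℝ (Fin ((L' + 1) * d')))).toSphere univ)⁻¹).toReal
      = ((((L' + 1) * d' : ℕ) : ℝ)
          * (Real.sqrt π ^ ((L' + 1) * d')
            / Real.Gamma ((((L' + 1) * d' : ℕ) : ℝ) / 2 + 1)))⁻¹ := by
    rw [Measure.toSphere_apply_univ, ENNReal.toReal_inv, ENNReal.toReal_mul]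
    simp only [finrank_euclideanSpace_fin, ENNReal.toReal_natCast]
    rw [aux_ball_toReal]
  -- main rewrite of LHS
  have hstep : ∫ v : Metric.sphere (0 : EuclideanSpace ℝ (Fin ((L' + 1) * d'))) 1,
        ⟪(v : EuclideanSpace ℝ (Fin ((L' + 1) * d'))),
          regularize (L' + 1) d' (v : EuclideanSpace ℝ (Fin ((L' + 1) * d')))⟫
        ∂(uniformSphere ((L' + 1) * d'))
      = ((((volume : Measure (EuclideanSpace ℝ (Fin ((L' + 1) * d')))).toSphere univ)⁻¹).toReal
          * ∫ v : Metric.sphere (0 : EuclideanSpace ℝ (Fin ((L' + 1) * d'))) 1, fE v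
              ∂((volume : Measure (EuclideanSpace ℝ (Fin ((L' + 1) * d')))).toSphere))
          / Real.sqrt ((L' + 1 : ℕ) : ℝ) := by
    rw [uniformSphere, integral_smul_measure, smul_eq_mul, mul_div_assoc]
    congr 1
    rw [← integral_div]
    refine integral_congr_ae (Filter.Eventually.of_forall fun v => ?_)
    exact aux_inner (L' + 1) d' v
  rw [hstep, hSf, hc]
  push_cast
  have hL0 : (0:ℝ) < (L':ℝ) + 1 := by positivity
  have hd0 : (0:ℝ) < (d':ℝ) := by exact_mod_cast Nat.pos_of_ne_zero (by omega)
  have harg1 : (((L':ℝ)+1) * ↑d' + ((L':ℝ)+1)) / (2 * ((L':ℝ)+1)) = ((d':ℝ)+1)/2 := by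
    field_simp
  have harg2 : ((L':ℝ)+1) * (d':ℝ) / (2 * ((L':ℝ)+1)) = (d':ℝ)/2 := by
    field_simp
  rw [harg1, harg2]
  have hga : Real.Gamma (((L':ℝ)+1) * ↑d' / 2 + 1)
      = (((L':ℝ)+1) * ↑d' / 2) * Real.Gamma (((L':ℝ)+1) * ↑d'/2) :=
    Real.Gamma_add_one (by positivity)
  have hgd : Real.Gamma ((d':ℝ)/2 + 1) = ((d':ℝ)/2) * Real.Gamma ((d':ℝ)/2) :=
    Real.Gamma_add_one (by positivity)
  rw [hga, hgd]
  have hsq1 : (Real.sqrt π) ^ ((L'+1) * d') = π ^ ((((L':ℝ)+1) * (d':ℝ))/2) := by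
    rw [Real.sqrt_eq_rpow, ← Real.rpow_natCast (π ^ ((1:ℝ)/2)) ((L'+1)*d'),
      ← Real.rpow_mul pi_pos.le]
    congr 1; push_cast; ring
  have hsq2 : (Real.sqrt π) ^ d' = π ^ ((d':ℝ)/2) := by
    rw [Real.sqrt_eq_rpow, ← Real.rpow_natCast (π ^ ((1:ℝ)/2)) d',
      ← Real.rpow_mul pi_pos.le]
    congr 1; ring
  rw [hsq1, hsq2]
  have hsplit : π ^ ((((L':ℝ)+1) * (d':ℝ))/2) = π ^ ((d':ℝ)/2) * π ^ (((L':ℝ) * (d':ℝ))/2) := by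
    rw [← Real.rpow_add pi_pos]; congr 1; ring
  rw [hsplit]
  have hg1 : (0:ℝ) < Real.Gamma ((d':ℝ)/2) := Real.Gamma_pos_of_pos (by positivity)
  have hg2 : (0:ℝ) < Real.Gamma (((d':ℝ)+1)/2) := Real.Gamma_pos_of_pos (by positivity)
  have hg3 : (0:ℝ) < Real.Gamma (((L':ℝ)+1) * ↑d'/2) := Real.Gamma_pos_of_pos (by positivity)
  have hg4 : (0:ℝ) < Real.Gamma ((((L':ℝ)+1) * ↑d'+1)/2) := Real.Gamma_pos_of_pos (by positivity)
  have hp1 : (0:ℝ) < π ^ ((d':ℝ)/2) := Real.rpow_pos_of_pos pi_pos _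
  have hp2 : (0:ℝ) < π ^ (((L':ℝ) * (d':ℝ))/2) := Real.rpow_pos_of_pos pi_pos _
  have hspos : (0:ℝ) < Real.sqrt ((L':ℝ)+1) := Real.sqrt_pos.mpr hL0
  set s := Real.sqrt ((L':ℝ)+1) with hsdef
  have hss : (L':ℝ)+1 = s * s := (Real.mul_self_sqrt hL0.le).symm
  rw [hss] at hg3 hg4 ⊢
  field_simp
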